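/- Let G act on a locally compact Hausdorff space X. If C₀(X) ⋊ᵣ G is prime, then the action of G on X is topologically transitive (for all nonempty open U, V ⊆ X there exists g ∈ G with g.U ∩ V ≠ ∅). -/
import Mathlib


open scoped ZeroAtInfty Pointwise

theorem stmt6 {G X A : Type*} [Group G] [Countable G]
    [TopologicalSpace X] [LocallyCompactSpace X] [T2Space X] [MulAction G X]
    (hcont : ∀ g : G, Continuous fun x : X => g • x)
    [NormedRing A] [StarRing A] [CStarRing A] [NormedAlgebra ℂ A] [CompleteSpace A]
    [StarModule ℂ A]
    -- the reduced crossed product `C₀(X) ⋊ᵣ G`, presented abstractly: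
    (π : C₀(X, ℂ) →⋆ₙₐ[ℂ] A) (hπ : Function.Injective π)
    (u : G → A) (hu : ∀ g, u g ∈ unitary A)
    (humul : ∀ g h : G, u (g * h) = u g * u h)
    (hcov : ∀ (g : G) (f f' : C₀(X, ℂ)), (∀ x : X, f' x = f (g⁻¹ • x)) →
      u g * π f * star (u g) = π f')
    (hdense : Dense (Submodule.span ℂ
      {a : A | ∃ (f : C₀(X, ℂ)) (g : G), a = π f * u g} : Set A))
    -- primeness of the crossed product
    (hprime : ∀ a b : A, (∀ c : A, a * c * b = 0) → a = 0 ∨ b = 0) :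
    -- topological transitivity
    ∀ U V : Set X, IsOpen U → U.Nonempty → IsOpen V → V.Nonempty →
      ∃ g : G, (g • U ∩ V).Nonempty := by
  intro U V hU hUne hV hVne
  by_contra hcontra
  push_neg at hcontra
  -- for all g, (g • U) ∩ V = ∅
  have hdisj : ∀ (g : G) (x : X), x ∈ V → g⁻¹ • x ∉ U := by
    intro g x hxV hxU
    exact Set.eq_empty_iff_forall_notMem.mp (hcontra g) x
      ⟨Set.mem_smul_set_iff_inv_smul_mem.mpr hxU, hxV⟩
  -- construct a nonzero C₀ function supported in a nonempty open set
  have construct : ∀ (W : Set X), IsOpen W → W.Nonempty →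
      ∃ f : C₀(X, ℂ), f ≠ 0 ∧ ∀ x : X, x ∉ W → f x = 0 := by
    intro W hW ⟨x₀, hx₀⟩
    obtain ⟨f, hf1, hf0, hfc, _⟩ := exists_continuous_one_zero_of_isCompact
      (isCompact_singleton (x := x₀)) hW.isClosed_compl
      (Set.disjoint_compl_right_iff_subset.mpr (Set.singleton_subset_iff.mpr hx₀))
    have hcc : HasCompactSupport (fun x : X => (f x : ℂ)) := by
      apply hfc.comp_left (g := fun r : ℝ => (r : ℂ)) (by simp)
    refine ⟨⟨⟨fun x => (f x : ℂ), Complex.continuous_ofReal.comp f.continuous⟩,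
      hcc.is_zero_at_infty⟩, ?_, ?_⟩
    · intro h
      have : (f x₀ : ℂ) = 0 := congrFun (congrArg DFunLike.coe h) x₀
      rw [hf1 rfl] at this
      simp at this
    · intro x hx
      have : f x = 0 := hf0 hx
      simp [ZeroAtInftyContinuousMap.coe_mk, this]
  obtain ⟨fU, hfU, hfUsupp⟩ := construct U hU hUne
  obtain ⟨fV, hfV, hfVsupp⟩ := construct V hV hVne
  -- key: π fV * c * π fU = 0 for all c
  have key : ∀ c : A, π fV * c * π fU = 0 := by
    have hgen : ∀ c ∈ {a : A | ∃ (f : C₀(X, ℂ)) (g : G), a = π f * u g},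
        π fV * c * π fU = 0 := by
      rintro c ⟨h, g, rfl⟩
      -- translate fU by g
      have hte : Filter.Tendsto (fun x : X => g⁻¹ • x) (Filter.cocompact X)
          (Filter.cocompact X) :=
        (Homeomorph.mk ⟨fun x => g⁻¹ • x, fun x => g • x,
          fun x => by simp, fun x => by simp⟩
          (hcont g⁻¹) (hcont g)).toCocompactMap.cocompact_tendsto'
      set fg : C₀(X, ℂ) :=
        ⟨⟨fun x => fU (g⁻¹ • x), fU.continuous.comp (hcont g⁻¹)⟩,
          fU.zero_at_infty'.comp hte⟩ with hfg
      have hcov' : u g * π fU * star (u g) = π fg := hcov g fU fg (fun x => rfl)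
      have huu : star (u g) * u g = 1 := (Unitary.mem_iff.mp (hu g)).1
      have hmove : u g * π fU = π fg * u g := by
        calc u g * π fU = u g * π fU * (star (u g) * u g) := by rw [huu, mul_one]
          _ = (u g * π fU * star (u g)) * u g := by noncomm_ring
          _ = π fg * u g := by rw [hcov']
      have hzero : fV * h * fg = 0 := by
        ext x
        by_cases hx : x ∈ V
        · have : fg x = 0 := hfUsupp _ (hdisj g x hx)
          simp [this]
        · have : fV x = 0 := hfVsupp x hx
          simp [this]
      calc π fV * (π h * u g) * π fU = π fV * π h * (u g * π fU) := by noncomm_ring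
        _ = π fV * π h * (π fg * u g) := by rw [hmove]
        _ = π (fV * h * fg) * u g := by rw [map_mul, map_mul]; noncomm_ring
        _ = 0 := by rw [hzero, map_zero, zero_mul]
    have hspan : ∀ c ∈ (Submodule.span ℂ
        {a : A | ∃ (f : C₀(X, ℂ)) (g : G), a = π f * u g} : Set A),
        π fV * c * π fU = 0 := by
      intro c hc
      induction hc using Submodule.span_induction with
      | mem a ha => exact hgen a ha
      | zero => simp
      | add a b _ _ ha hb => rw [mul_add, add_mul, ha, hb, add_zero]
      | smul r a _ ha => rw [mul_smul_comm, smul_mul_assoc, ha, smul_zero]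
    -- extend by continuity
    intro c
    have hcont' : Continuous (fun c : A => π fV * c * π fU) := by fun_prop
    have : Set.EqOn (fun c : A => π fV * c * π fU) (fun _ => (0 : A))
        (closure (Submodule.span ℂ
          {a : A | ∃ (f : C₀(X, ℂ)) (g : G), a = π f * u g} : Set A)) :=
      Set.EqOn.closure hspan hcont' continuous_const
    have hc : c ∈ closure (Submodule.span ℂ
        {a : A | ∃ (f : C₀(X, ℂ)) (g : G), a = π f * u g} : Set A) :=
      hdense.closure_eq ▸ Set.mem_univ c
    exact this hc
  rcases hprime _ _ key with h | h
  · exact hfV (hπ (by rw [h, map_zero]))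
  · exact hfU (hπ (by rw [h, map_zero]))
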